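/- Resolution monotonicity in the smoothness-indicator coefficient C_β (Lemma 3.2): Let τ > 0 and let u_C, u_D, v_C, v_D be positive reals with u_D > u_C, v_D > v_C, and u_D²/u_C² > v_D²/v_C². For x ≥ 0 define y(x) = (1 + τ/(u_D² + x·v_D²)) / (1 + τ/(u_C² + x·v_C²)). Then y is strictly increasing on (0, ∞); in particular if C_1 > C_2 > 0 then y(C_1) > y(C_2). -/

import Mathlib

/-- Abstract core inequality for the ratio `(1+τ/β_D)/(1+τ/β_C)`:
if the denominators satisfy the two cross inequalities, the ratio increases. -/
lemma ratio_key (τ Ca Cb Da Db : ℝ) (hτ : 0 < τ)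
    (hCa : 0 < Ca) (hCb : 0 < Cb) (hDa : 0 < Da) (hDb : 0 < Db)
    (h1 : Ca * Db < Cb * Da)
    (h2 : Ca * Cb * (Db - Da) < Da * Db * (Cb - Ca)) :
    (1 + τ / Da) / (1 + τ / Ca) < (1 + τ / Db) / (1 + τ / Cb) := by
  have hca : 0 < 1 + τ / Ca := by positivity
  have hcb : 0 < 1 + τ / Cb := by positivity
  rw [div_lt_div_iff₀ hca hcb]
  rw [show (1 + τ / Da) * (1 + τ / Cb) = 1 + τ/Da + τ/Cb + τ*τ/(Da*Cb) by
        field_simp; ring,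
      show (1 + τ / Db) * (1 + τ / Ca) = 1 + τ/Db + τ/Ca + τ*τ/(Db*Ca) by
        field_simp; ring]
  have key1 : τ*τ/(Da*Cb) < τ*τ/(Db*Ca) := by
    apply div_lt_div_of_pos_left (by positivity) (by positivity)
    linarith [h1]
  have key2 : τ/Da + τ/Cb ≤ τ/Db + τ/Ca := by
    rw [div_add_div _ _ hDa.ne' hCb.ne', div_add_div _ _ hDb.ne' hCa.ne',
        div_le_div_iff₀ (by positivity) (by positivity)]
    nlinarith [mul_pos hτ (sub_pos.mpr h2)]
  linarith

/-- Resolution monotonicity in the smoothness-indicator coefficient `C_β`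
(Lemma 3.2): the weight ratio `y` is strictly increasing on `(0, ∞)`. -/
theorem resolution_monotone_in_Cbeta
    (τ uC uD vC vD : ℝ) (hτ : 0 < τ)
    (huC : 0 < uC) (hvC : 0 < vC) (hu : uC < uD) (hv : vC < vD)
    (hratio : vD ^ 2 / vC ^ 2 < uD ^ 2 / uC ^ 2) :
    StrictMonoOn
      (fun x : ℝ =>
        (1 + τ / (uD ^ 2 + x * vD ^ 2)) / (1 + τ / (uC ^ 2 + x * vC ^ 2)))
      (Set.Ioi 0) ∧
    ∀ C1 C2 : ℝ, 0 < C2 → C2 < C1 →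
      (1 + τ / (uD ^ 2 + C2 * vD ^ 2)) / (1 + τ / (uC ^ 2 + C2 * vC ^ 2))
        < (1 + τ / (uD ^ 2 + C1 * vD ^ 2)) / (1 + τ / (uC ^ 2 + C1 * vC ^ 2)) := by
  have huD : (0:ℝ) < uD := lt_trans huC hu
  have hvD : (0:ℝ) < vD := lt_trans hvC hv
  -- the determinant `uD² vC² − uC² vD² > 0`
  have hD : uC ^ 2 * vD ^ 2 < uD ^ 2 * vC ^ 2 := by
    rw [div_lt_div_iff₀ (by positivity) (by positivity)] at hratio
    nlinarith [hratio]
  have main : ∀ a b : ℝ, 0 < a → a < b →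
      (1 + τ / (uD ^ 2 + a * vD ^ 2)) / (1 + τ / (uC ^ 2 + a * vC ^ 2))
        < (1 + τ / (uD ^ 2 + b * vD ^ 2)) / (1 + τ / (uC ^ 2 + b * vC ^ 2)) := by
    intro a b ha hab
    have hb : 0 < b := lt_trans ha hab
    apply ratio_key τ _ _ _ _ hτ (by positivity) (by positivity) (by positivity)
      (by positivity)
    · nlinarith [mul_pos (sub_pos.mpr hab) (sub_pos.mpr hD)]
    · have hu2 : uC ^ 2 < uD ^ 2 := by nlinarith
      have hv2 : vC ^ 2 < vD ^ 2 := by nlinarith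
      have hA : uC ^ 4 * vD ^ 2 < uD ^ 4 * vC ^ 2 := by
        nlinarith [mul_pos (sub_pos.mpr hD)
            (add_pos (mul_pos (pow_pos huD 2) (pow_pos hvC 2))
              (mul_pos (pow_pos huC 2) (pow_pos hvD 2))),
          mul_pos (mul_pos (pow_pos huD 2) (pow_pos huD 2))
            (mul_pos (pow_pos hvC 2) (sub_pos.mpr hv2)),
          pow_pos hvD 2]
      have hB : uC ^ 2 * vC ^ 2 * vD ^ 2 ≤ uD ^ 2 * vC ^ 2 * vD ^ 2 := by nlinarith
      have hC : vC ^ 4 * vD ^ 2 ≤ vC ^ 2 * vD ^ 4 := by nlinarith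
      have hq : (uC ^ 2 + a * vC ^ 2) * (uC ^ 2 + b * vC ^ 2) * vD ^ 2
          < (uD ^ 2 + a * vD ^ 2) * (uD ^ 2 + b * vD ^ 2) * vC ^ 2 := by
        nlinarith [hA,
          mul_nonneg (by linarith : (0:ℝ) ≤ a + b) (sub_nonneg.mpr hB),
          mul_nonneg (mul_pos ha hb).le (sub_nonneg.mpr hC)]
      have hsub1 : (uD ^ 2 + b * vD ^ 2) - (uD ^ 2 + a * vD ^ 2) = (b - a) * vD ^ 2 := by ring
      have hsub2 : (uC ^ 2 + b * vC ^ 2) - (uC ^ 2 + a * vC ^ 2) = (b - a) * vC ^ 2 := by ring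
      rw [hsub1, hsub2]
      have hba : 0 < b - a := sub_pos.mpr hab
      calc (uC ^ 2 + a * vC ^ 2) * (uC ^ 2 + b * vC ^ 2) * ((b - a) * vD ^ 2)
          = ((uC ^ 2 + a * vC ^ 2) * (uC ^ 2 + b * vC ^ 2) * vD ^ 2) * (b - a) := by ring
        _ < ((uD ^ 2 + a * vD ^ 2) * (uD ^ 2 + b * vD ^ 2) * vC ^ 2) * (b - a) :=
            mul_lt_mul_of_pos_right hq hba
        _ = (uD ^ 2 + a * vD ^ 2) * (uD ^ 2 + b * vD ^ 2) * ((b - a) * vC ^ 2) := by ring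
  refine ⟨fun a ha b hb hab => main a b ha hab, fun C1 C2 h2 h12 => main C2 C1 h2 h12⟩
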